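/- Let π be a finite group and M a ℤπ-lattice (finitely generated and ℤ-torsion-free). Suppose M is invertible, i.e. a direct summand of a permutation π-lattice. Then for any exact sequence of π-lattices 0 → C → E → M → 0 with C coflabby (H¹(π', C) = 0 for all subgroups π' ≤ π), the sequence splits. -/

import Mathlib

/-- Let `π` be a finite group and `C`, `E`, `M` be `ℤπ`-lattices (finitely
generated, ℤ-torsion-free `ℤπ`-modules).  Suppose `M` is invertible, i.e. a
direct summand of a permutation `π`-lattice (here expressed as: `M` is a
π-equivariant retract of `ℤ[S]` for a finite `π`-set `S`).  Then every exact
sequence `0 → C → E → M → 0` of `π`-lattices with `C` coflabby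
(`H¹(π', C) = 0` for every subgroup `π'`, expressed via 1-cocycles being
1-coboundaries) splits equivariantly. -/
theorem invertible_lattice_sequence_splits
    (π : Type) [Group π] [Finite π]
    (C E M : Type) [AddCommGroup C] [AddCommGroup E] [AddCommGroup M]
    [DistribMulAction π C] [DistribMulAction π E] [DistribMulAction π M]
    [AddGroup.FG C] [AddGroup.FG E] [AddGroup.FG M]
    [NoZeroSMulDivisors ℤ C] [NoZeroSMulDivisors ℤ E] [NoZeroSMulDivisors ℤ M]
    (hMinv : ∃ (S : Type) (_ : Fintype S) (a : π →* Equiv.Perm S)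
        (i : M →+ (S →₀ ℤ)) (r : (S →₀ ℤ) →+ M),
        (∀ (g : π) (x : M), i (g • x) = Finsupp.mapDomain (a g) (i x)) ∧
        (∀ (g : π) (y : S →₀ ℤ), r (Finsupp.mapDomain (a g) y) = g • r y) ∧
        ∀ x, r (i x) = x)
    (hC : ∀ (H : Subgroup π) (f : H → C),
        (∀ g h : H, f (g * h) = f g + (g : π) • f h) →
        ∃ c : C, ∀ g : H, f g = (g : π) • c - c)
    (ι : C →+ E) (pr : E →+ M)
    (hι : ∀ (g : π) (c : C), ι (g • c) = g • ι c)
    (hpr : ∀ (g : π) (e : E), pr (g • e) = g • pr e)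
    (hinj : Function.Injective ι) (hsurj : Function.Surjective pr)
    (hexact : ∀ e : E, pr e = 0 ↔ ∃ c, ι c = e) :
    ∃ s : M →+ E, (∀ (g : π) (x : M), s (g • x) = g • s x) ∧ ∀ x, pr (s x) = x := by
  classical
  obtain ⟨S, _, a, i, r, hi, hr, hri⟩ := hMinv
  -- a ℤ-linear section of pr
  haveI : Module.Finite ℤ M := Module.Finite.iff_addGroup_fg.mpr ‹_›
  haveI : Module.Free ℤ M := Module.free_of_finite_type_torsion_free'
  obtain ⟨σ, hσ'⟩ := Module.projective_lifting_property pr.toIntLinearMap LinearMap.id hsurj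
  have hσ : ∀ x, pr (σ x) = x := fun x => LinearMap.ext_iff.mp hσ' x
  -- the cocycle D : π → M → C measuring non-equivariance of σ
  have hDex : ∀ (g : π) (x : M), ∃ c : C, ι c = g • σ (g⁻¹ • x) - σ x := by
    intro g x
    rw [← hexact, map_sub, hpr, hσ, hσ, smul_inv_smul, sub_self]
  choose D hD using hDex
  have Dadd : ∀ g x y, D g (x + y) = D g x + D g y := by
    intro g x y
    apply hinj
    rw [map_add, hD, hD, hD]
    simp only [smul_add, map_add]
    abel
  have Dsmul : ∀ (g : π) (n : ℤ) (x : M), D g (n • x) = n • D g x := by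
    intro g n x
    apply hinj
    rw [map_zsmul, hD, hD, smul_comm g⁻¹ n x, σ.map_smul n, σ.map_smul n, smul_comm g n, smul_sub]
  have Dzero : ∀ g : π, D g 0 = 0 := by
    intro g
    apply hinj
    rw [hD, smul_zero, map_zero, smul_zero, sub_self, map_zero]
  have Dcoc : ∀ (g h : π) (x : M), D (g * h) x = D g x + g • D h (g⁻¹ • x) := by
    intro g h x
    apply hinj
    rw [map_add, hD, hι, hD, hD]
    simp only [smul_sub, mul_inv_rev, mul_smul]
    abel
  -- the action of π on S
  letI : MulAction π S :=
    { smul := fun g s => a g s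
      one_smul := fun s => by show a 1 s = s; rw [map_one]; rfl
      mul_smul := fun g h s => by
        show a (g * h) s = a g (a h s); rw [map_mul]; rfl }
  have rs : ∀ (g : π) (s : S), r (Finsupp.single (g • s) 1) = g • r (Finsupp.single s 1) := by
    intro g s
    have := hr g (Finsupp.single s 1)
    rwa [Finsupp.mapDomain_single] at this
  -- the induced cocycle with values in (S → C)
  set f'' : π → S → C := fun g s => D g (r (Finsupp.single s 1)) with hf''
  have f''coc : ∀ (g h : π) (s : S), f'' (g * h) s = f'' g s + g • f'' h (g⁻¹ • s) := by
    intro g h s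
    show D (g * h) (r (Finsupp.single s 1))
        = D g (r (Finsupp.single s 1)) + g • D h (r (Finsupp.single (g⁻¹ • s) 1))
    rw [rs g⁻¹ s, Dcoc]
  -- orbit decomposition of S
  set sa : Setoid S := ⟨fun s t => ∃ g : π, g • t = s,
    ⟨fun s => ⟨1, one_smul _ _⟩,
     fun ⟨g, hg⟩ => ⟨g⁻¹, by rw [← hg, inv_smul_smul]⟩,
     fun ⟨g, hg⟩ ⟨k, hk⟩ => ⟨g * k, by rw [mul_smul, hk, hg]⟩⟩⟩ with hsa
  -- solving the cocycle on each orbit via coflabbiness at the stabilizer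
  have hcq : ∀ q : Quotient sa, ∃ c : C,
      ∀ h : MulAction.stabilizer π q.out, f'' (h : π) q.out = (h : π) • c - c := by
    intro q
    apply hC (MulAction.stabilizer π q.out) (fun h => f'' (h : π) q.out)
    intro g h
    have hco := f''coc (g : π) (h : π) q.out
    have hst : (g : π)⁻¹ • q.out = q.out := by
      rw [inv_smul_eq_iff]; exact g.2.symm
    rw [hst] at hco
    simpa using hco
  choose cQ hcQ using hcq
  have hgsex : ∀ s : S, ∃ g : π, g • (Quotient.mk sa s).out = s :=
    fun s => sa.iseqv.symm (Quotient.mk_out (s := sa) s)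
  choose gs hgs using hgsex
  set F : S → C := fun s => gs s • cQ (Quotient.mk sa s) - f'' (gs s) s with hFdef
  -- the cocycle f'' is a coboundary
  have hF : ∀ (g : π) (s : S), f'' g s = g • F (g⁻¹ • s) - F s := by
    intro g s
    have hquot : Quotient.mk sa (g⁻¹ • s) = Quotient.mk sa s := Quotient.sound ⟨g⁻¹, rfl⟩
    set q := Quotient.mk sa s with hq
    set r0 := q.out with hr0
    set u := gs s with hu'
    have hu : u • r0 = s := hgs s
    have hv' := hgs (g⁻¹ • s)
    rw [hquot] at hv'
    set v := gs (g⁻¹ • s) with hv''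
    have hmem : u⁻¹ * (g * v) ∈ MulAction.stabilizer π r0 := by
      rw [MulAction.mem_stabilizer_iff, mul_smul, mul_smul, hv', smul_inv_smul,
        inv_smul_eq_iff]
      exact hu.symm
    have hc := hcQ q ⟨u⁻¹ * (g * v), hmem⟩
    simp only [Subgroup.coe_mk] at hc
    have e1 : f'' (g * v) s = f'' g s + g • f'' v (g⁻¹ • s) := f''coc g v s
    have e2 : f'' (u * (u⁻¹ * (g * v))) s
        = f'' u s + u • f'' (u⁻¹ * (g * v)) (u⁻¹ • s) := f''coc u _ s
    have hus : u⁻¹ • s = r0 := by rw [inv_smul_eq_iff]; exact hu.symm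
    rw [hus, hc, mul_inv_cancel_left] at e2
    have hF1 : F (g⁻¹ • s) = v • cQ q - f'' v (g⁻¹ • s) := by
      rw [show F (g⁻¹ • s)
          = gs (g⁻¹ • s) • cQ (Quotient.mk sa (g⁻¹ • s)) - f'' (gs (g⁻¹ • s)) (g⁻¹ • s)
          from rfl, hquot]
    have hF2 : F s = u • cQ q - f'' u s := rfl
    have e1' : g • f'' v (g⁻¹ • s) = f'' (g * v) s - f'' g s := by rw [e1]; abel
    rw [hF1, hF2, smul_sub g, e1', e2, smul_sub u, smul_smul u, mul_inv_cancel_left,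
      smul_smul g v]
    abel
  -- assemble the equivariant correction φ = L ∘ i
  set L : (S →₀ ℤ) →+ C := Finsupp.liftAddHom (fun s => zmultiplesHom C (F s)) with hL
  have hLsingle : ∀ (s : S) (n : ℤ), L (Finsupp.single s n) = n • F s := by
    intro s n
    rw [hL, Finsupp.liftAddHom_apply_single, zmultiplesHom_apply]
  have hhom : ∀ (g : π) (y : S →₀ ℤ),
      D g (r y) = g • L (Finsupp.mapDomain (a g⁻¹) y) - L y := by
    intro g y
    induction y using Finsupp.induction_linear with
    | zero => simp [Dzero, map_zero]
    | add f₁ f₂ h₁ h₂ =>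
      rw [Finsupp.mapDomain_add, map_add, map_add, map_add, Dadd, h₁, h₂, smul_add]
      abel
    | single s n =>
      have hsing : (Finsupp.single s n : S →₀ ℤ) = n • Finsupp.single s 1 := by
        rw [Finsupp.smul_single, smul_eq_mul, mul_one]
      rw [Finsupp.mapDomain_single, hLsingle, hLsingle, hsing, map_zsmul, Dsmul,
        smul_comm g n, ← smul_sub]
      have : (a g⁻¹) s = g⁻¹ • s := rfl
      rw [this, ← hF]
  have key : ∀ (g : π) (x : M), D g x = g • L (i (g⁻¹ • x)) - L (i x) := by
    intro g x
    have := hhom g (i x)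
    rw [hri, ← hi] at this
    exact this
  -- final splitting
  refine ⟨σ.toAddMonoidHom - ι.comp (L.comp i), ?_, ?_⟩
  · intro g x
    have h1 := hD g (g • x)
    rw [inv_smul_smul] at h1
    have h2 := key g (g • x)
    rw [inv_smul_smul] at h2
    have h3 : σ (g • x) = g • σ x - ι (D g (g • x)) := by rw [h1]; abel
    simp only [AddMonoidHom.sub_apply, AddMonoidHom.comp_apply,
      LinearMap.toAddMonoidHom_coe]
    rw [h3, h2, map_sub, hι, smul_sub]
    abel
  · intro x
    simp only [AddMonoidHom.sub_apply, AddMonoidHom.comp_apply,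
      LinearMap.toAddMonoidHom_coe]
    rw [map_sub, hσ, (hexact _).mpr ⟨_, rfl⟩, sub_zero]
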